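/- Let k ≥ 2 and let 1 ≤ r ≤ n satisfy k·r ≤ (k−1)·2n. If 𝓕 ⊆ 𝓟^r(M_n) is k-wise intersecting, then |𝓕| ≤ 2^{r−1}·C(n−1, r−1). -/

import Mathlib

/-- The partner of a vertex `v` in the perfect matching `Mₙ` on `{1,…,2n}`:
vertices `i` and `i+n` (for `1 ≤ i ≤ n`) are joined by an edge. -/
def partnerMn (n v : ℕ) : ℕ := if v ≤ n then v + n else v - n

/-- `A` is an independent set of vertices of the perfect matching graph `Mₙ`. -/
def IsIndepMn (n : ℕ) (A : Finset ℕ) : Prop :=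
  A ⊆ Finset.Icc 1 (2 * n) ∧ ∀ i ∈ Finset.Icc 1 n, ¬(i ∈ A ∧ i + n ∈ A)

/-- The independence number `α(Mₙ)` of the perfect matching graph `Mₙ`. -/
noncomputable def indepNumMn (n : ℕ) : ℕ := sSup {k : ℕ | ∃ A : Finset ℕ, IsIndepMn n A ∧ A.card = k}

/-- `𝓘ʳ(Mₙ)`: the family of all independent `r`-subsets of `V(Mₙ)`. -/
def famI (n r : ℕ) : Set (Finset ℕ) := {A | A.card = r ∧ IsIndepMn n A}

/-- `𝓜ʳ(Mₙ)`: the family of all `r`-subsets of `V(Mₙ)` containing an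
independent set of maximum size `α(Mₙ)`. -/
def famM (n r : ℕ) : Set (Finset ℕ) :=
  {A | A ⊆ Finset.Icc 1 (2 * n) ∧ A.card = r ∧
    ∃ B ⊆ A, IsIndepMn n B ∧ B.card = indepNumMn n}

/-- `𝓟ʳ(Mₙ) = 𝓘ʳ(Mₙ) ∪ 𝓜ʳ(Mₙ)`. -/
def famP (n r : ℕ) : Set (Finset ℕ) := famI n r ∪ famM n r

/-- A family is `k`-wise intersecting: any `k` (not necessarily distinct) members
have a common element. -/
def KWiseIntersecting (k : ℕ) (𝓕 : Finset (Finset ℕ)) : Prop :=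
  ∀ f : Fin k → Finset ℕ, (∀ i, f i ∈ 𝓕) → ∃ v, ∀ i, v ∈ f i


section KWAuxSection
namespace KWAux

variable {n r : ℕ}

lemma castk [NeZero (2*n)] {a b : ℕ} (ha : a < 2*n) (hb : b < 2*n)
    (h : (a : ZMod (2*n)) = b) : a = b := by
  have h1 := ZMod.val_cast_of_lt (n := 2*n) ha
  have h2 := ZMod.val_cast_of_lt (n := 2*n) hb
  rw [h] at h1; omega

lemma val_cast_self [NeZero (2*n)] (x : ZMod (2*n)) : ((x.val : ℕ) : ZMod (2*n)) = x :=
  ZMod.natCast_rightInverse x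

lemma addn_addn [NeZero (2*n)] (x : ZMod (2*n)) : x + n + n = x := by
  have : ((2*n : ℕ) : ZMod (2*n)) = 0 := ZMod.natCast_self _
  have h2 : ((n : ℕ) : ZMod (2*n)) + n = 0 := by
    rw [← Nat.cast_add, show n + n = 2*n by ring, this]
  rw [add_assoc, h2, add_zero]

lemma ncast_ne_zero (hn : 1 ≤ n) [NeZero (2*n)] : ((n:ℕ) : ZMod (2*n)) ≠ 0 := by
  intro h
  have h1 := ZMod.val_cast_of_lt (n := 2*n) (show n < 2*n by omega)
  rw [h] at h1
  simp at h1
  omega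

lemma addn_ne (hn : 1 ≤ n) [NeZero (2*n)] (x : ZMod (2*n)) : x + n ≠ x := by
  intro h
  have : ((n:ℕ) : ZMod (2*n)) = 0 := by
    have := congrArg (fun y => y - x) h
    simpa [add_comm, add_sub_cancel_right] using this
  exact ncast_ne_zero hn this

/-- the interval of length `r` starting at `s` on the cycle `ZMod (2n)` -/
def itv (n r : ℕ) (s : ZMod (2*n)) : Finset (ZMod (2*n)) :=
  (Finset.range r).image (fun a : ℕ => s + (a : ZMod (2*n)))

lemma mem_itv {s x : ZMod (2*n)} : x ∈ itv n r s ↔ ∃ a, a < r ∧ x = s + (a : ZMod (2*n)) := by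
  simp [itv, eq_comm]

lemma card_itv (hrn : r ≤ n) [NeZero (2*n)] (s : ZMod (2*n)) : (itv n r s).card = r := by
  rw [itv, Finset.card_image_of_injOn, Finset.card_range]
  intro a ha b hb hab
  simp only [Finset.coe_range, Set.mem_Iio] at ha hb
  exact castk (by omega) (by omega) (add_left_cancel hab)

lemma indep_itv (hrn : r ≤ n) [NeZero (2*n)] (s : ZMod (2*n)) :
    ∀ x ∈ itv n r s, x + n ∉ itv n r s := by
  intro x hx hxn
  rw [mem_itv] at hx hxn
  obtain ⟨a, ha, rfl⟩ := hx
  obtain ⟨b, hb, hb'⟩ := hxn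
  rw [add_assoc] at hb'
  have h1 : ((a + n : ℕ) : ZMod (2*n)) = (b : ℕ) := by
    push_cast
    exact add_left_cancel hb'
  have := castk (by omega) (by omega) h1
  omega

lemma itv_disj (hrn : r ≤ n) [NeZero (2*n)] (s : ZMod (2*n)) :
    ∀ x ∈ itv n r s, x ∉ itv n r (s + (r : ZMod (2*n))) := by
  intro x hx hx'
  rw [mem_itv] at hx hx'
  obtain ⟨a, ha, rfl⟩ := hx
  obtain ⟨b, hb, hb'⟩ := hx'
  rw [add_assoc] at hb'
  have h1 : ((a : ℕ) : ZMod (2*n)) = ((r + b : ℕ) : ZMod (2*n)) := by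
    push_cast
    exact add_left_cancel hb'
  have := castk (by omega) (by omega) h1
  omega


lemma katona (hn : 1 ≤ n) (hr : 1 ≤ r) (hrn : r ≤ n) [NeZero (2*n)]
    (T : Finset (ZMod (2*n)))
    (hT : ∀ s ∈ T, ∀ t ∈ T, ∃ x, x ∈ itv n r s ∧ x ∈ itv n r t) :
    T.card ≤ r := by
  rcases T.eq_empty_or_nonempty with rfl | ⟨t, ht⟩
  · simp
  set f : ZMod (2*n) → ℕ := fun s => (s - t).val with hf
  -- f determines s
  have finj : ∀ s s', f s = f s' → s = s' := by
    intro s s' h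
    have h1 : s - t = s' - t := by
      rw [← val_cast_self (s - t), ← val_cast_self (s' - t), hf] at *
      exact congrArg _ h
    have := congrArg (fun y => y + t) h1
    simpa using this
  -- range claim
  have hclaim : ∀ s ∈ T, f s < r ∨ (2*n - r < f s ∧ f s < 2*n) := by
    intro s hs
    obtain ⟨x, hxs, hxt⟩ := hT s hs t ht
    rw [mem_itv] at hxs hxt
    obtain ⟨a, ha, rfl⟩ := hxs
    obtain ⟨b, hb, hb'⟩ := hxt
    have hst : s - t = (b : ZMod (2*n)) - a := by
      linear_combination hb'
    rcases le_or_gt a b with hab | hab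
    · left
      have : s - t = ((b - a : ℕ) : ZMod (2*n)) := by
        rw [hst, Nat.cast_sub hab]
      rw [hf]; simp only
      rw [this, ZMod.val_cast_of_lt (by omega)]
      omega
    · right
      have h2 : s - t = -(((a - b : ℕ) : ZMod (2*n))) := by
        rw [hst, Nat.cast_sub (le_of_lt hab)]; ring
      have hc1 : ((a - b : ℕ) : ZMod (2*n)).val = a - b :=
        ZMod.val_cast_of_lt (show a - b < 2*n by omega)
      have hcne : ((a - b : ℕ) : ZMod (2*n)) ≠ 0 := by
        intro h0
        rw [h0] at hc1
        simp only [ZMod.val_zero] at hc1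
        omega
      have : (-((a - b : ℕ) : ZMod (2*n))).val = 2*n - (a - b) := by
        rw [ZMod.neg_val]
        simp [hcne, hc1]
      rw [hf]; simp only
      rw [h2, this]
      omega
  -- the folding map
  set g : ZMod (2*n) → ℕ := fun s => if f s < r then f s else f s - (2*n - r) with hg
  have hmaps : ∀ s ∈ T, g s ∈ Finset.range r := by
    intro s hs
    rcases hclaim s hs with h | h
    · simp [hg, h]
    · have : ¬ f s < r := by omega
      simp only [hg, this, if_false, Finset.mem_range]
      omega
  have key : ∀ s ∈ T, ∀ s' ∈ T, f s < r → ¬ f s' < r → g s = g s' → False := by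
    intro s hs s' hs' h1 h2 hgg
    rcases hclaim s' hs' with h | h; · omega
    have hfs' : f s' = f s + (2*n - r) := by
      simp only [hg, h1, if_true, h2, if_false] at hgg
      omega
    -- s' = s + (2n - r), so s = s' + r
    have hs'' : s' = s + ((2*n - r : ℕ) : ZMod (2*n)) := by
      have e1 : s = t + ((f s : ℕ) : ZMod (2*n)) := by
        rw [hf]; simp only; rw [val_cast_self]; ring
      have e2 : s' = t + ((f s' : ℕ) : ZMod (2*n)) := by
        rw [hf]; simp only; rw [val_cast_self]; ring
      rw [e1, e2, hfs']
      push_cast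
      ring
    have hss : s = s' + (r : ZMod (2*n)) := by
      rw [hs'']
      have : ((2*n - r : ℕ) : ZMod (2*n)) + (r : ZMod (2*n)) = 0 := by
        rw [← Nat.cast_add, show 2*n - r + r = 2*n by omega, ZMod.natCast_self]
      rw [add_assoc, this, add_zero]
    obtain ⟨x, hx1, hx2⟩ := hT s hs s' hs'
    rw [hss] at hx1
    exact itv_disj hrn s' x hx2 hx1
  have hinj : Set.InjOn g T := by
    intro s hs s' hs' hgg
    by_cases h1 : f s < r <;> by_cases h2 : f s' < r
    · apply finj; simp only [hg, h1, if_true, h2] at hgg; simpa [hgg]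
    · exact absurd (key s hs s' hs' h1 h2 hgg) (by simp)
    · exact absurd (key s' hs' s hs h2 h1 hgg.symm) (by simp)
    · rcases hclaim s hs with h | h; · omega
      rcases hclaim s' hs' with h' | h'; · omega
      apply finj
      simp only [hg, h1, if_false, h2] at hgg
      omega
  calc T.card ≤ (Finset.range r).card := Finset.card_le_card_of_injOn g hmaps hinj
    _ = r := Finset.card_range r


def Equivariant (n : ℕ) (g : Equiv.Perm (ZMod (2*n))) : Prop :=
  ∀ x, g (x + (n : ZMod (2*n))) = g x + (n : ZMod (2*n))

lemma equivariant_one : Equivariant n 1 := fun _ => rfl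

lemma equivariant_mul {g h : Equiv.Perm (ZMod (2*n))} (hg : Equivariant n g)
    (hh : Equivariant n h) : Equivariant n (g * h) := by
  intro x
  simp only [Equiv.Perm.mul_apply, hh x, hg (h x)]

lemma equivariant_inv {g : Equiv.Perm (ZMod (2*n))} (hg : Equivariant n g) :
    Equivariant n g⁻¹ := by
  intro x
  apply g.injective
  rw [Equiv.Perm.inv_def, Equiv.apply_symm_apply, hg, Equiv.apply_symm_apply]

/-- an equivariant permutation moving `b` to `a`, supported on `{a,b,a+n,b+n}` -/
lemma exists_move (hn : 1 ≤ n) [NeZero (2*n)] (a b : ZMod (2*n)) :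
    ∃ s : Equiv.Perm (ZMod (2*n)), Equivariant n s ∧ s b = a ∧
      (∀ x, x ≠ a → x ≠ b → x ≠ a + n → x ≠ b + n → s x = x) := by
  rcases eq_or_ne a b with rfl | hab
  · exact ⟨1, equivariant_one, rfl, fun x _ _ _ _ => rfl⟩
  rcases eq_or_ne b (a + n) with rfl | hban
  · -- s = swap a (a+n)
    refine ⟨Equiv.swap a (a + n), ?_, Equiv.swap_apply_right _ _, ?_⟩
    · intro x
      rcases eq_or_ne x a with rfl | hxa
      · rw [Equiv.swap_apply_right, Equiv.swap_apply_left, addn_addn]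
      rcases eq_or_ne x (a + n) with rfl | hxan
      · rw [addn_addn, Equiv.swap_apply_left, Equiv.swap_apply_right]
      · have h1 : x + n ≠ a := by
          intro h; apply hxan; rw [← h, addn_addn]
        have h2 : x + n ≠ a + n := by
          intro h; apply hxa; exact add_right_cancel h
        rw [Equiv.swap_apply_of_ne_of_ne h1 h2, Equiv.swap_apply_of_ne_of_ne hxa hxan]
    · intro x hxa _ hxan _
      exact Equiv.swap_apply_of_ne_of_ne hxa hxan
  · -- general case
    have h3 : a ≠ b + n := by
      intro h; apply hban; rw [h, addn_addn]
    have h4 : a + n ≠ b + n := fun h => hab (add_right_cancel h)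
    have h5 : b ≠ b + n := (addn_ne hn b).symm
    have h6 : a ≠ a + n := (addn_ne hn a).symm
    set s := Equiv.swap a b * Equiv.swap (a + n) (b + n) with hs
    have sa : s a = b := by
      simp only [hs, Equiv.Perm.mul_apply]
      rw [Equiv.swap_apply_of_ne_of_ne h6 h3, Equiv.swap_apply_left]
    have sb : s b = a := by
      simp only [hs, Equiv.Perm.mul_apply]
      rw [Equiv.swap_apply_of_ne_of_ne hban h5, Equiv.swap_apply_right]
    have san : s (a + n) = b + n := by
      simp only [hs, Equiv.Perm.mul_apply]
      rw [Equiv.swap_apply_left, Equiv.swap_apply_of_ne_of_ne (Ne.symm h3) (Ne.symm h5)]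
    have sbn : s (b + n) = a + n := by
      simp only [hs, Equiv.Perm.mul_apply]
      rw [Equiv.swap_apply_right, Equiv.swap_apply_of_ne_of_ne (Ne.symm h6) (Ne.symm hban)]
    have soth : ∀ x, x ≠ a → x ≠ b → x ≠ a + n → x ≠ b + n → s x = x := by
      intro x hxa hxb hxan hxbn
      simp only [hs, Equiv.Perm.mul_apply]
      rw [Equiv.swap_apply_of_ne_of_ne hxan hxbn, Equiv.swap_apply_of_ne_of_ne hxa hxb]
    refine ⟨s, ?_, sb, soth⟩
    intro x
    rcases eq_or_ne x a with rfl | hxa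
    · rw [san, sa]
    rcases eq_or_ne x b with rfl | hxb
    · rw [sbn, sb]
    rcases eq_or_ne x (a + n) with rfl | hxan
    · rw [addn_addn, sa, san, addn_addn]
    rcases eq_or_ne x (b + n) with rfl | hxbn
    · rw [addn_addn, sb, sbn, addn_addn]
    · have k1 : x + n ≠ a := fun h => hxan (by rw [← h, addn_addn])
      have k2 : x + n ≠ b := fun h => hxbn (by rw [← h, addn_addn])
      have k3 : x + n ≠ a + n := fun h => hxa (add_right_cancel h)
      have k4 : x + n ≠ b + n := fun h => hxb (add_right_cancel h)
      rw [soth _ k1 k2 k3 k4, soth _ hxa hxb hxan hxbn]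


lemma equivTrans (hn : 1 ≤ n) [NeZero (2*n)] :
    ∀ (k : ℕ) (A B : Finset (ZMod (2*n))), A.card = k → B.card = k →
    (∀ x ∈ A, x + (n : ZMod (2*n)) ∉ A) → (∀ x ∈ B, x + (n : ZMod (2*n)) ∉ B) →
    ∃ g : Equiv.Perm (ZMod (2*n)), Equivariant n g ∧
      (∀ x, x ∉ A → x + (n : ZMod (2*n)) ∉ A → x ∉ B → x + (n : ZMod (2*n)) ∉ B → g x = x) ∧
      A.image g = B := by
  intro k
  induction k with
  | zero =>
    intro A B hA hB _ _
    rw [Finset.card_eq_zero] at hA hB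
    subst hA; subst hB
    exact ⟨1, equivariant_one, fun x _ _ _ _ => rfl, by simp⟩
  | succ k ih =>
    intro A B hA hB hAf hBf
    obtain ⟨a, ha⟩ := Finset.card_pos.mp (by omega : 0 < A.card)
    obtain ⟨b, hb⟩ := Finset.card_pos.mp (by omega : 0 < B.card)
    obtain ⟨s, hseq, hsb, hssupp⟩ := exists_move hn a b
    -- s maps its "support quadruple" into itself
    have hsquad : ∀ y, s y = y ∨ (s y = a ∨ s y = b ∨ s y = a + n ∨ s y = b + n) := by
      intro y
      by_cases h1 : s y = a; · right; exact Or.inl h1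
      by_cases h2 : s y = b; · right; exact Or.inr (Or.inl h2)
      by_cases h3 : s y = a + n; · right; exact Or.inr (Or.inr (Or.inl h3))
      by_cases h4 : s y = b + n; · right; exact Or.inr (Or.inr (Or.inr h4))
      left
      exact s.injective (hssupp _ h1 h2 h3 h4)
    set B₂ := B.image s with hB₂
    have haB₂ : a ∈ B₂ := by
      rw [hB₂, Finset.mem_image]; exact ⟨b, hb, hsb⟩
    have hB₂card : B₂.card = k + 1 := by
      rw [hB₂, Finset.card_image_of_injective _ s.injective, hB]
    have hB₂f : ∀ x ∈ B₂, x + (n : ZMod (2*n)) ∉ B₂ := by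
      intro x hx hx'
      rw [hB₂, Finset.mem_image] at hx hx'
      obtain ⟨y, hy, rfl⟩ := hx
      obtain ⟨y', hy', hy''⟩ := hx'
      rw [← hseq y] at hy''
      exact hBf y hy (s.injective hy'' ▸ hy')
    set A' := A.erase a with hA'
    set B' := B₂.erase a with hB'
    have hA'card : A'.card = k := by rw [hA', Finset.card_erase_of_mem ha, hA]; omega
    have hB'card : B'.card = k := by rw [hB', Finset.card_erase_of_mem haB₂, hB₂card]; omega
    have hA'f : ∀ x ∈ A', x + (n : ZMod (2*n)) ∉ A' := fun x hx hx' =>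
      hAf x (Finset.mem_of_mem_erase hx) (Finset.mem_of_mem_erase hx')
    have hB'f : ∀ x ∈ B', x + (n : ZMod (2*n)) ∉ B' := fun x hx hx' =>
      hB₂f x (Finset.mem_of_mem_erase hx) (Finset.mem_of_mem_erase hx')
    obtain ⟨g', hg'eq, hg'supp, hg'im⟩ := ih A' B' hA'card hB'card hA'f hB'f
    have hg'a : g' a = a := by
      apply hg'supp
      · exact Finset.notMem_erase a A
      · intro h; exact hAf a ha (Finset.mem_of_mem_erase h)
      · exact Finset.notMem_erase a B₂
      · intro h; exact hB₂f a haB₂ (Finset.mem_of_mem_erase h)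
    have himA : A.image g' = B₂ := by
      rw [← Finset.insert_erase ha, Finset.image_insert, hg'a, ← hA', hg'im, hB',
        Finset.insert_erase haB₂]
    refine ⟨s⁻¹ * g', equivariant_mul (equivariant_inv hseq) hg'eq, ?_, ?_⟩
    · -- support
      intro x hx1 hx2 hx3 hx4
      have hxa : x ≠ a := fun h => hx1 (h ▸ ha)
      have hxb : x ≠ b := fun h => hx3 (h ▸ hb)
      have hxan : x ≠ a + n := fun h => hx2 (by rw [h, addn_addn]; exact ha)
      have hxbn : x ≠ b + n := fun h => hx4 (by rw [h, addn_addn]; exact hb)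
      have hxna : x + n ≠ a := fun h => hxan (by rw [← h, addn_addn])
      have hxnb : x + n ≠ b := fun h => hxbn (by rw [← h, addn_addn])
      have hxnan : x + (n : ZMod (2*n)) ≠ a + n := fun h => hxa (add_right_cancel h)
      have hxnbn : x + (n : ZMod (2*n)) ≠ b + n := fun h => hxb (add_right_cancel h)
      have hnotB₂ : ∀ z, z ≠ a → z ≠ b → z ≠ a + n → z ≠ b + n → z ∉ B → z ∉ B₂ := by
        intro z z1 z2 z3 z4 hzB hzB₂
        rw [hB₂, Finset.mem_image] at hzB₂
        obtain ⟨y, hy, rfl⟩ := hzB₂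
        rcases hsquad y with h | h
        · exact hzB (by rw [h]; exact hy)
        · rcases h with h | h | h | h <;> [exact z1 h; exact z2 h; exact z3 h; exact z4 h]
      have hxB₂ : x ∉ B₂ := hnotB₂ x hxa hxb hxan hxbn hx3
      have hxnB₂ : x + n ∉ B₂ := hnotB₂ _ hxna hxnb hxnan hxnbn hx4
      have hg'x : g' x = x := by
        apply hg'supp
        · intro h; exact hx1 (Finset.mem_of_mem_erase h)
        · intro h; exact hx2 (Finset.mem_of_mem_erase h)
        · intro h; exact hxB₂ (Finset.mem_of_mem_erase h)
        · intro h; exact hxnB₂ (Finset.mem_of_mem_erase h)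
      have hsx : s x = x := hssupp x hxa hxb hxan hxbn
      have : s⁻¹ x = x := by
        apply s.injective; rw [Equiv.Perm.inv_def, Equiv.apply_symm_apply, hsx]
      simp only [Equiv.Perm.mul_apply, hg'x, this]
    · -- image
      have : A.image (⇑(s⁻¹ * g')) = (A.image g').image ⇑s⁻¹ := by
        rw [Finset.image_image]; rfl
      rw [this, himA, hB₂, Finset.image_image]
      have : (⇑s⁻¹ ∘ ⇑s) = id := by
        funext z; simp
      rw [this, Finset.image_id]


lemma modn_cases (hn : 1 ≤ n) [NeZero (2*n)] (x y : ZMod (2*n))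
    (h : x.val % n = y.val % n) : x = y ∨ x = y + n ∨ y = x + n := by
  have hx := ZMod.val_lt x
  have hy := ZMod.val_lt y
  have dx := Nat.div_add_mod x.val n
  have dy := Nat.div_add_mod y.val n
  have qx : x.val / n < 2 := (Nat.div_lt_iff_lt_mul (by omega)).mpr (by omega)
  have qy : y.val / n < 2 := (Nat.div_lt_iff_lt_mul (by omega)).mpr (by omega)
  have tri : x.val = y.val ∨ x.val = y.val + n ∨ y.val = x.val + n := by
    have qx' : x.val / n = 0 ∨ x.val / n = 1 :=
      Nat.le_one_iff_eq_zero_or_eq_one.mp (Nat.lt_succ_iff.mp qx)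
    have qy' : y.val / n = 0 ∨ y.val / n = 1 :=
      Nat.le_one_iff_eq_zero_or_eq_one.mp (Nat.lt_succ_iff.mp qy)
    rcases qx' with h0 | h0 <;> rcases qy' with h1 | h1 <;>
      rw [h0] at dx <;> rw [h1] at dy <;> omega
  rcases tri with h1 | h1 | h1
  · left; rw [← val_cast_self x, ← val_cast_self y, h1]
  · right; left; rw [← val_cast_self x, ← val_cast_self y, h1]; push_cast; ring
  · right; right; rw [← val_cast_self x, ← val_cast_self y, h1]; push_cast; ring

lemma val_addn (hn : 1 ≤ n) [NeZero (2*n)] (x : ZMod (2*n)) :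
    (x + (n : ZMod (2*n))).val = if x.val < n then x.val + n else x.val - n := by
  have hx := ZMod.val_lt x
  have h1 : x + (n : ZMod (2*n)) = ((x.val + n : ℕ) : ZMod (2*n)) := by
    rw [Nat.cast_add, val_cast_self]
  by_cases h : x.val < n
  · rw [if_pos h, h1, ZMod.val_cast_of_lt (by omega)]
  · rw [if_neg h, h1]
    have h2 : ((x.val + n : ℕ) : ZMod (2*n)) = ((x.val - n : ℕ) : ZMod (2*n)) := by
      have : x.val + n = (x.val - n) + 2*n := by omega
      rw [this, Nat.cast_add, ZMod.natCast_self, add_zero]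
    rw [h2, ZMod.val_cast_of_lt (by omega)]

lemma card_indep_le (hn : 1 ≤ n) (hr : 1 ≤ r) (hrn : r ≤ n) [NeZero (2*n)] :
    ((Finset.univ : Finset (Finset (ZMod (2*n)))).filter
      (fun F => F.card = r ∧ ∀ x ∈ F, x + (n : ZMod (2*n)) ∉ F)).card
      ≤ 2^r * n.choose r := by
  set p : ZMod (2*n) → ℕ := fun x => x.val % n with hp
  set ψ : Finset (ZMod (2*n)) → (Σ _ : Finset ℕ, Finset ℕ) :=
    fun F => ⟨F.image p, (F.filter fun x => x.val < n).image p⟩ with hψ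
  set T : Finset (Σ _ : Finset ℕ, Finset ℕ) :=
    ((Finset.range n).powersetCard r).sigma (fun A => A.powerset) with hT
  -- injectivity of p on an independent set
  have pinj : ∀ F : Finset (ZMod (2*n)), (∀ x ∈ F, x + (n : ZMod (2*n)) ∉ F) →
      Set.InjOn p F := by
    intro F hF x hx y hy hxy
    rcases modn_cases hn x y hxy with h | h | h
    · exact h
    · exact absurd (h ▸ hx) (hF y hy)
    · exact absurd (h ▸ hy) (hF x hx)
  -- recovery
  have hrec : ∀ F : Finset (ZMod (2*n)), (∀ x ∈ F, x + (n : ZMod (2*n)) ∉ F) →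
      ∀ x : ZMod (2*n), x ∈ F ↔ (p x ∈ F.image p ∧
        (x.val < n ↔ p x ∈ (F.filter fun z => z.val < n).image p)) := by
    intro F hF x
    constructor
    · intro hx
      refine ⟨Finset.mem_image_of_mem _ hx, ?_, ?_⟩
      · intro hv
        exact Finset.mem_image_of_mem _ (Finset.mem_filter.mpr ⟨hx, hv⟩)
      · intro hmem
        obtain ⟨z, hz, hpz⟩ := Finset.mem_image.mp hmem
        have hz' := Finset.mem_filter.mp hz
        have := pinj F hF hz'.1 hx hpz
        exact this ▸ hz'.2
    · rintro ⟨h1, h2⟩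
      obtain ⟨y, hy, hpy⟩ := Finset.mem_image.mp h1
      rcases modn_cases hn y x hpy with h | h | h
      · exact h ▸ hy
      · -- y = x + n
        exfalso
        by_cases hxv : x.val < n
        · obtain ⟨z, hz, hpz⟩ := Finset.mem_image.mp (h2.mp hxv)
          have hz' := Finset.mem_filter.mp hz
          have hzy : z = y := pinj F hF hz'.1 hy (hpz.trans hpy.symm)
          have : y.val = x.val + n := by rw [h, val_addn hn, if_pos hxv]
          rw [hzy] at hz'
          have := hz'.2
          omega
        · have hyval : y.val < n := by rw [h, val_addn hn, if_neg hxv]; have := ZMod.val_lt x; omega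
          have : p x ∈ (F.filter fun z => z.val < n).image p := by
            rw [← hpy]
            exact Finset.mem_image_of_mem _ (Finset.mem_filter.mpr ⟨hy, hyval⟩)
          exact hxv (h2.mpr this)
      · -- x = y + n
        exfalso
        by_cases hyv : y.val < n
        · have hxv : ¬ x.val < n := by rw [h, val_addn hn, if_pos hyv]; omega
          have : p x ∈ (F.filter fun z => z.val < n).image p := by
            rw [← hpy]
            exact Finset.mem_image_of_mem _ (Finset.mem_filter.mpr ⟨hy, hyv⟩)
          exact hxv (h2.mpr this)
        · have hxv : x.val < n := by
            rw [h, val_addn hn, if_neg hyv]; have := ZMod.val_lt y; omega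
          obtain ⟨z, hz, hpz⟩ := Finset.mem_image.mp (h2.mp hxv)
          have hz' := Finset.mem_filter.mp hz
          have hzy : z = y := pinj F hF hz'.1 hy (hpz.trans hpy.symm)
          rw [hzy] at hz'
          exact hyv hz'.2
  -- ψ maps into T
  have hmaps : ∀ F ∈ (Finset.univ : Finset (Finset (ZMod (2*n)))).filter
      (fun F => F.card = r ∧ ∀ x ∈ F, x + (n : ZMod (2*n)) ∉ F), ψ F ∈ T := by
    intro F hF
    have hFm := Finset.mem_filter.mp hF
    have hFcard := hFm.2.1
    have hFf := hFm.2.2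
    rw [hT, Finset.mem_sigma]
    constructor
    · rw [Finset.mem_powersetCard]
      refine ⟨?_, ?_⟩
      · intro v hv
        obtain ⟨x, _, rfl⟩ := Finset.mem_image.mp hv
        exact Finset.mem_range.mpr (Nat.mod_lt _ (by omega))
      · rw [Finset.card_image_of_injOn (pinj F hFf), hFcard]
    · rw [Finset.mem_powerset]
      exact Finset.image_subset_image (Finset.filter_subset _ _)
  -- ψ injective
  have hinj : Set.InjOn ψ ((Finset.univ : Finset (Finset (ZMod (2*n)))).filter
      (fun F => F.card = r ∧ ∀ x ∈ F, x + (n : ZMod (2*n)) ∉ F)) := by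
    intro F hF F' hF' h
    have hFf := (Finset.mem_filter.mp hF).2.2
    have hF'f := (Finset.mem_filter.mp hF').2.2
    have h1 : F.image p = F'.image p := congrArg (fun z => z.1) h
    have h2 : (F.filter fun x => x.val < n).image p
        = (F'.filter fun x => x.val < n).image p := congrArg (fun z => z.2) h
    ext x
    rw [hrec F hFf x, hrec F' hF'f x, h1, h2]
  calc ((Finset.univ : Finset (Finset (ZMod (2*n)))).filter _).card
      ≤ T.card := Finset.card_le_card_of_injOn ψ hmaps hinj
    _ = 2^r * n.choose r := by
        rw [hT, Finset.card_sigma]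
        rw [Finset.sum_congr rfl (fun A hA => by
          rw [Finset.card_powerset, (Finset.mem_powersetCard.mp hA).2])]
        rw [Finset.sum_const, Finset.card_powersetCard, Finset.card_range, smul_eq_mul,
          Nat.mul_comm]


instance decEquivariant (n : ℕ) [NeZero (2*n)] : DecidablePred (Equivariant n) :=
  fun _ => by unfold Equivariant; infer_instance

theorem signedEKR (hn : 1 ≤ n) (hr : 1 ≤ r) (hrn : r ≤ n)
    (𝓖 : Finset (Finset (ZMod (2*n))))
    (hGcard : ∀ F ∈ 𝓖, F.card = r)
    (hGind : ∀ F ∈ 𝓖, ∀ x ∈ F, x + (n : ZMod (2*n)) ∉ F)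
    (hGint : ∀ F ∈ 𝓖, ∀ F' ∈ 𝓖, ∃ v, v ∈ F ∧ v ∈ F') :
    𝓖.card ≤ 2^(r-1) * (n-1).choose (r-1) := by
  haveI : NeZero (2*n) := ⟨by omega⟩
  rcases 𝓖.eq_empty_or_nonempty with rfl | ⟨F₀, hF₀⟩
  · simp
  set G : Finset (Equiv.Perm (ZMod (2*n))) := Finset.univ.filter (Equivariant n) with hG
  set N : Finset (Finset (ZMod (2*n))) := Finset.univ.filter
    (fun F => F.card = r ∧ ∀ x ∈ F, x + (n : ZMod (2*n)) ∉ F) with hN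
  set D := (G ×ˢ (Finset.univ : Finset (ZMod (2*n)))) with hD
  set im : Equiv.Perm (ZMod (2*n)) × ZMod (2*n) → Finset (ZMod (2*n)) :=
    fun q => (itv n r q.2).image q.1 with him
  set c : Finset (ZMod (2*n)) → ℕ := fun F => (D.filter (fun q => im q = F)).card with hc
  have hGsubN : 𝓖 ⊆ N := fun F hF =>
    Finset.mem_filter.mpr ⟨Finset.mem_univ F, hGcard F hF, hGind F hF⟩
  have hmemN : ∀ F ∈ N, F.card = r ∧ ∀ x ∈ F, x + (n : ZMod (2*n)) ∉ F :=
    fun F hF => (Finset.mem_filter.mp hF).2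
  have himN : ∀ q ∈ D, im q ∈ N := by
    rintro ⟨g, s⟩ hq
    have hgG : g ∈ G := (Finset.mem_product.mp hq).1
    have hgeq : Equivariant n g := (Finset.mem_filter.mp hgG).2
    refine Finset.mem_filter.mpr ⟨Finset.mem_univ _, ?_, ?_⟩
    · show ((itv n r s).image g).card = r
      rw [Finset.card_image_of_injective _ g.injective, card_itv hrn]
    · show ∀ x ∈ (itv n r s).image g, _
      intro x hx hx'
      obtain ⟨y, hy, rfl⟩ := Finset.mem_image.mp hx
      obtain ⟨y', hy', hy''⟩ := Finset.mem_image.mp hx'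
      rw [← hgeq y] at hy''
      have := g.injective hy''
      exact indep_itv hrn s y hy (this ▸ hy')
  -- constancy of `c` on `N`
  have hconst : ∀ F ∈ N, ∀ F' ∈ N, c F = c F' := by
    intro F hF F' hF'
    obtain ⟨hFc, hFi⟩ := hmemN F hF
    obtain ⟨hF'c, hF'i⟩ := hmemN F' hF'
    obtain ⟨h, hheq, -, hhim⟩ := equivTrans hn r F F' hFc hF'c hFi hF'i
    apply Finset.card_bij (fun q _ => (h * q.1, q.2))
    · rintro ⟨g, s⟩ hq
      have hq' := Finset.mem_filter.mp hq
      have hgG : g ∈ G := (Finset.mem_product.mp hq'.1).1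
      have hgeq : Equivariant n g := (Finset.mem_filter.mp hgG).2
      refine Finset.mem_filter.mpr ⟨?_, ?_⟩
      · refine Finset.mem_product.mpr ⟨?_, Finset.mem_univ _⟩
        exact Finset.mem_filter.mpr ⟨Finset.mem_univ _, equivariant_mul hheq hgeq⟩
      · show (itv n r s).image ⇑(h * g) = F'
        have : (itv n r s).image ⇑(h * g) = ((itv n r s).image g).image h := by
          rw [Finset.image_image]; rfl
        rw [this, show Finset.image (⇑g) (itv n r s) = F from hq'.2, hhim]
    · rintro ⟨g₁, s₁⟩ h₁ ⟨g₂, s₂⟩ h₂ heq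
      simp only [Prod.mk.injEq] at heq
      exact Prod.ext (mul_left_cancel heq.1) heq.2
    · rintro ⟨g, s⟩ hq
      have hq' := Finset.mem_filter.mp hq
      have hgG : g ∈ G := (Finset.mem_product.mp hq'.1).1
      have hgeq : Equivariant n g := (Finset.mem_filter.mp hgG).2
      refine ⟨(h⁻¹ * g, s), Finset.mem_filter.mpr ⟨?_, ?_⟩, ?_⟩
      · refine Finset.mem_product.mpr ⟨?_, Finset.mem_univ _⟩
        exact Finset.mem_filter.mpr ⟨Finset.mem_univ _, equivariant_mul (equivariant_inv hheq) hgeq⟩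
      · show (itv n r s).image ⇑(h⁻¹ * g) = F
        have e1 : (itv n r s).image ⇑(h⁻¹ * g) = ((itv n r s).image g).image ⇑h⁻¹ := by
          rw [Finset.image_image]; rfl
        have e2 : F'.image ⇑h⁻¹ = F := by
          rw [← hhim, Finset.image_image]
          have : (⇑h⁻¹ ∘ ⇑h) = id := by funext z; simp
          rw [this, Finset.image_id]
        rw [e1, show Finset.image (⇑g) (itv n r s) = F' from hq'.2, e2]
      · have : h * (h⁻¹ * g) = g := by rw [← mul_assoc, mul_inv_cancel, one_mul]
        simp [this]
  -- first count: over 𝓖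
  have hsum1 : (D.filter (fun q => im q ∈ 𝓖)).card = ∑ F ∈ 𝓖, c F := by
    rw [Finset.card_eq_sum_card_fiberwise (f := im) (s := D.filter (fun q => im q ∈ 𝓖)) (t := 𝓖)
      (fun q hq => (Finset.mem_filter.mp hq).2)]
    apply Finset.sum_congr rfl
    intro F hF
    rw [hc]
    congr 1
    rw [Finset.filter_filter]
    apply Finset.filter_congr
    intro q _
    constructor
    · rintro ⟨_, h2⟩; exact h2
    · intro h2; exact ⟨h2 ▸ hF, h2⟩
  -- second count: over N
  have hsum2 : D.card = ∑ F ∈ N, c F :=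
    Finset.card_eq_sum_card_fiberwise himN
  have hDcard : D.card = G.card * (2*n) := by
    rw [hD, Finset.card_product, Finset.card_univ, ZMod.card]
  -- Katona bound per permutation
  have hperg : ∀ g ∈ G, ((Finset.univ : Finset (ZMod (2*n))).filter
      (fun s => (itv n r s).image g ∈ 𝓖)).card ≤ r := by
    intro g hg
    apply katona hn hr hrn
    intro s hs t ht
    have hs' := (Finset.mem_filter.mp hs).2
    have ht' := (Finset.mem_filter.mp ht).2
    obtain ⟨v, hv1, hv2⟩ := hGint _ hs' _ ht'
    obtain ⟨x, hx, rfl⟩ := Finset.mem_image.mp hv1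
    obtain ⟨x', hx', hxx⟩ := Finset.mem_image.mp hv2
    exact ⟨x, hx, g.injective hxx ▸ hx'⟩
  have hsum1' : (D.filter (fun q => im q ∈ 𝓖)).card ≤ G.card * r := by
    rw [Finset.card_eq_sum_card_fiberwise (f := fun q => q.1) (t := G)
      (fun q hq => (Finset.mem_product.mp (Finset.mem_filter.mp hq).1).1)]
    calc ∑ g ∈ G, ((D.filter (fun q => im q ∈ 𝓖)).filter (fun q => q.1 = g)).card
        ≤ ∑ _g ∈ G, r := by
          apply Finset.sum_le_sum
          intro g hg
          calc ((D.filter (fun q => im q ∈ 𝓖)).filter (fun q => q.1 = g)).card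
              ≤ ((Finset.univ : Finset (ZMod (2*n))).filter
                  (fun s => (itv n r s).image g ∈ 𝓖)).card := by
                apply Finset.card_le_card_of_injOn (fun q => q.2)
                · rintro ⟨g', s⟩ hq
                  have hq1 := Finset.mem_filter.mp hq
                  have hg' : g' = g := hq1.2
                  have hq2 := (Finset.mem_filter.mp hq1.1).2
                  subst hg'
                  exact Finset.mem_filter.mpr ⟨Finset.mem_univ _, hq2⟩
                · rintro ⟨g₁, s₁⟩ h₁ ⟨g₂, s₂⟩ h₂ heq
                  simp only at heq
                  have e₁ : g₁ = g := (Finset.mem_filter.mp (Finset.mem_coe.mp h₁)).2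
                  have e₂ : g₂ = g := (Finset.mem_filter.mp (Finset.mem_coe.mp h₂)).2
                  rw [Prod.ext_iff]
                  exact ⟨e₁.trans e₂.symm, heq⟩
            _ ≤ r := hperg g hg
      _ = G.card * r := by rw [Finset.sum_const, smul_eq_mul]
  -- assemble
  have hF₀N : F₀ ∈ N := hGsubN hF₀
  have e1 : 𝓖.card * c F₀ ≤ G.card * r := by
    calc 𝓖.card * c F₀ = ∑ F ∈ 𝓖, c F := by
          rw [Finset.sum_congr rfl (fun F hF => hconst F (hGsubN hF) F₀ hF₀N),
            Finset.sum_const, smul_eq_mul]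
      _ = (D.filter (fun q => im q ∈ 𝓖)).card := hsum1.symm
      _ ≤ G.card * r := hsum1'
  have e2 : G.card * (2*n) = N.card * c F₀ := by
    rw [← hDcard, hsum2,
      Finset.sum_congr rfl (fun F hF => hconst F hF F₀ hF₀N),
      Finset.sum_const, smul_eq_mul]
  have e3 : N.card ≤ 2^r * n.choose r := card_indep_le hn hr hrn
  have hG1 : 0 < G.card :=
    Finset.card_pos.mpr ⟨1, Finset.mem_filter.mpr ⟨Finset.mem_univ _, equivariant_one⟩⟩
  have hkey : r * (2^r * n.choose r) = 2*n * (2^(r-1) * (n-1).choose (r-1)) := by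
    have h1 : n * (n-1).choose (r-1) = n.choose r * r := by
      have h := Nat.add_one_mul_choose_eq (n-1) (r-1)
      simp only [Nat.succ_eq_add_one, show n - 1 + 1 = n from by omega,
        show r - 1 + 1 = r from by omega] at h
      exact h
    have h2 : 2^r = 2 * 2^(r-1) := by
      rw [← pow_succ', show r - 1 + 1 = r by omega]
    calc r * (2^r * n.choose r) = 2^r * (n.choose r * r) := by ring
      _ = (2*2^(r-1)) * (n * (n-1).choose (r-1)) := by rw [h2, h1]
      _ = 2*n*(2^(r-1)*(n-1).choose (r-1)) := by ring
  have chain : (G.card * (2*n)) * 𝓖.card ≤ (G.card * (2*n)) * (2^(r-1) * (n-1).choose (r-1)) := by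
    calc (G.card * (2*n)) * 𝓖.card = 𝓖.card * (N.card * c F₀) := by rw [← e2]; ring
      _ = N.card * (𝓖.card * c F₀) := by ring
      _ ≤ N.card * (G.card * r) := Nat.mul_le_mul_left _ e1
      _ ≤ (2^r * n.choose r) * (G.card * r) := Nat.mul_le_mul_right _ e3
      _ = G.card * (r * (2^r * n.choose r)) := by ring
      _ = G.card * (2*n * (2^(r-1)*(n-1).choose (r-1))) := by rw [hkey]
      _ = (G.card * (2*n)) * (2^(r-1)*(n-1).choose (r-1)) := by ring
  exact Nat.le_of_mul_le_mul_left chain (by positivity)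


lemma indepNum_eq (hn : 1 ≤ n) : indepNumMn n = n := by
  have hub : ∀ k ∈ {k : ℕ | ∃ A : Finset ℕ, IsIndepMn n A ∧ A.card = k}, k ≤ n := by
    rintro k ⟨A, ⟨hsub, hpair⟩, rfl⟩
    have : A.card ≤ (Finset.Icc 1 n).card := by
      apply Finset.card_le_card_of_injOn (fun x => if x ≤ n then x else x - n)
      · intro x hx
        have := Finset.mem_Icc.mp (hsub hx)
        rw [Finset.mem_coe, Finset.mem_Icc]; beta_reduce
        split_ifs <;> omega
      · intro x hx y hy hxy
        have hx' := Finset.mem_Icc.mp (hsub (Finset.mem_coe.mp hx))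
        have hy' := Finset.mem_Icc.mp (hsub (Finset.mem_coe.mp hy))
        simp only at hxy
        split_ifs at hxy with h1 h2 h2
        · exact hxy
        · exfalso
          apply hpair x (Finset.mem_Icc.mpr ⟨hx'.1, h1⟩)
          exact ⟨hx, by rw [show x + n = y by omega]; exact hy⟩
        · exfalso
          apply hpair y (Finset.mem_Icc.mpr ⟨hy'.1, h2⟩)
          exact ⟨hy, by rw [show y + n = x by omega]; exact hx⟩
        · omega
    rw [Nat.card_Icc] at this
    omega
  have hmem : n ∈ {k : ℕ | ∃ A : Finset ℕ, IsIndepMn n A ∧ A.card = k} := by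
    refine ⟨Finset.Icc 1 n, ⟨Finset.Icc_subset_Icc le_rfl (by omega), ?_⟩, ?_⟩
    · rintro i hi ⟨-, h2⟩
      have := Finset.mem_Icc.mp h2
      have := Finset.mem_Icc.mp hi
      omega
    · rw [Nat.card_Icc]; omega
  apply le_antisymm
  · exact csSup_le ⟨n, hmem⟩ hub
  · exact le_csSup ⟨n, fun k hk => hub k hk⟩ hmem


end KWAux
end KWAuxSection

/-- If `k·r ≤ (k−1)·2n`, `1 ≤ r ≤ n` and `𝓕 ⊆ 𝓟ʳ(Mₙ)` is `k`-wise intersecting, then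
`|𝓕| ≤ 2^(r−1)·C(n−1, r−1)`. -/
theorem kwise_matching_bound_small (n r k : ℕ) (hn : 1 ≤ n) (hr : 1 ≤ r) (hrn : r ≤ n)
    (hk : 2 ≤ k) (hkr : k * r ≤ (k - 1) * (2 * n))
    (𝓕 : Finset (Finset ℕ)) (h𝓕 : ↑𝓕 ⊆ famP n r)
    (hint : KWiseIntersecting k 𝓕) :
    𝓕.card ≤ 2 ^ (r - 1) * (n - 1).choose (r - 1) := by
  classical
  haveI : NeZero (2*n) := ⟨by omega⟩
  -- every member is an independent r-set
  have hprops : ∀ F ∈ 𝓕, F.card = r ∧ IsIndepMn n F := by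
    intro F hF
    rcases h𝓕 hF with hI | hM
    · exact ⟨hI.1, hI.2⟩
    · obtain ⟨hsub, hcard, B, hBsub, hBind, hBcard⟩ := hM
      rw [KWAux.indepNum_eq hn] at hBcard
      have h1 : n ≤ F.card := hBcard ▸ Finset.card_le_card hBsub
      have h2 : B = F := Finset.eq_of_subset_of_card_le hBsub (by omega)
      exact ⟨hcard, h2 ▸ hBind⟩
  -- pairwise intersecting
  have hpw : ∀ F ∈ 𝓕, ∀ F' ∈ 𝓕, ∃ v, v ∈ F ∧ v ∈ F' := by
    intro F hF F' hF'
    obtain ⟨v, hv⟩ := hint (fun i => if i.val = 0 then F else F')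
      (fun i => by by_cases h : i.val = 0 <;> simp [h, hF, hF'])
    have h0 := hv ⟨0, by omega⟩
    have h1 := hv ⟨1, by omega⟩
    simp only [Fin.val_mk, if_pos rfl] at h0
    simp only [Fin.val_mk, Nat.one_ne_zero, if_false] at h1
    exact ⟨v, h0, h1⟩
  -- transfer to ZMod (2n)
  set e : ℕ → ZMod (2*n) := fun m => ((m - 1 : ℕ) : ZMod (2*n)) with he
  have einj : ∀ u ∈ Finset.Icc 1 (2*n), ∀ v ∈ Finset.Icc 1 (2*n), e u = e v → u = v := by
    intro u hu v hv h
    have hu' := Finset.mem_Icc.mp hu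
    have hv' := Finset.mem_Icc.mp hv
    have := KWAux.castk (a := u - 1) (b := v - 1) (by omega) (by omega) h
    omega
  set 𝓖 : Finset (Finset (ZMod (2*n))) := 𝓕.image (fun F => F.image e) with h𝓖
  have hcard𝓖 : 𝓕.card = 𝓖.card := by
    rw [h𝓖, Finset.card_image_of_injOn]
    intro F hF F' hF' h
    have hFsub := (hprops F (Finset.mem_coe.mp hF)).2.1
    have hF'sub := (hprops F' (Finset.mem_coe.mp hF')).2.1
    have hh : F.image e = F'.image e := h
    ext x
    constructor
    · intro hx
      have : e x ∈ F'.image e := by rw [← hh]; exact Finset.mem_image_of_mem e hx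
      obtain ⟨y, hy, hye⟩ := Finset.mem_image.mp this
      rwa [einj y (hF'sub hy) x (hFsub hx) hye] at hy
    · intro hx
      have : e x ∈ F.image e := by rw [hh]; exact Finset.mem_image_of_mem e hx
      obtain ⟨y, hy, hye⟩ := Finset.mem_image.mp this
      rwa [einj y (hFsub hy) x (hF'sub hx) hye] at hy
  rw [hcard𝓖]
  apply KWAux.signedEKR hn hr hrn
  · -- cards
    rintro Fi hFi
    obtain ⟨F, hF, rfl⟩ := Finset.mem_image.mp hFi
    obtain ⟨hFcard, hFsub, -⟩ := hprops F hF
    rw [Finset.card_image_of_injOn (fun u hu v hv h => einj u (hFsub hu) v (hFsub hv) h), hFcard]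
  · -- independence
    rintro Fi hFi x hx hx'
    obtain ⟨F, hF, rfl⟩ := Finset.mem_image.mp hFi
    obtain ⟨-, hFsub, hFpair⟩ := hprops F hF
    obtain ⟨u, hu, rfl⟩ := Finset.mem_image.mp hx
    obtain ⟨v, hv, hve⟩ := Finset.mem_image.mp hx'
    have hu' := Finset.mem_Icc.mp (hFsub hu)
    have hv' := Finset.mem_Icc.mp (hFsub hv)
    have hve' : ((v - 1 : ℕ) : ZMod (2*n)) = ((u - 1 + n : ℕ) : ZMod (2*n)) := by
      rw [Nat.cast_add]; exact hve
    by_cases hun : u ≤ n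
    · have := KWAux.castk (a := v - 1) (b := u - 1 + n) (by omega) (by omega) hve'
      exact hFpair u (Finset.mem_Icc.mpr ⟨by omega, hun⟩)
        ⟨hu, by rw [show u + n = v by omega]; exact hv⟩
    · have hcast : ((u - 1 + n : ℕ) : ZMod (2*n)) = ((u - 1 - n : ℕ) : ZMod (2*n)) := by
        rw [show u - 1 + n = (u - 1 - n) + 2*n by omega, Nat.cast_add, ZMod.natCast_self, add_zero]
      rw [hcast] at hve'
      have := KWAux.castk (a := v - 1) (b := u - 1 - n) (by omega) (by omega) hve'
      exact hFpair v (Finset.mem_Icc.mpr ⟨by omega, by omega⟩)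
        ⟨hv, by rw [show v + n = u by omega]; exact hu⟩
  · -- intersecting
    rintro Fi hFi Fi' hFi'
    obtain ⟨F, hF, rfl⟩ := Finset.mem_image.mp hFi
    obtain ⟨F', hF', rfl⟩ := Finset.mem_image.mp hFi'
    obtain ⟨v, hv1, hv2⟩ := hpw F hF F' hF'
    exact ⟨e v, Finset.mem_image_of_mem e hv1, Finset.mem_image_of_mem e hv2⟩
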